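/- Let d ≥ 1, let f ∈ F(L,m) with unique minimizer x*, and let L̄ ≥ L with κ̄ = L̄/m > 1. Let x_t, y_t ∈ ℝ^d be arbitrary, set y_{t+1} = x_t − (1/L̄)∇f(x_t), and let x_{t+1} ∈ ℝ^d be arbitrary. Then (1 + δ^GD) U(x_{t+1}, y_{t+1}) − U(x_t, y_t) ≤ L̄ ⟨x_t − y_t, x_t − x*⟩ − (L̄/2)‖x_t − y_t‖², where δ^GD = 1/(κ̄ − 1). -/

import Mathlib

open scoped RealInnerProductSpace

/-- The auxiliary function `U(x, y) = f(y) − f(x*) + (L̄/2)‖y − x*‖²`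
(it depends only on `y`). -/
noncomputable def lyapU {d : ℕ} (f : EuclideanSpace ℝ (Fin d) → ℝ)
    (xstar : EuclideanSpace ℝ (Fin d)) (Lbar : ℝ)
    (_x y : EuclideanSpace ℝ (Fin d)) : ℝ :=
  f y - f xstar + Lbar / 2 * ‖y - xstar‖ ^ 2

set_option maxHeartbeats 1000000 in
/-- Descent of the auxiliary function `U` along one gradient
step: for arbitrary `x_t, y_t` and `y_{t+1} = x_t − (1/L̄)∇f(x_t)` (and
arbitrary `x_{t+1}`),
`(1 + δ^GD) U(x_{t+1}, y_{t+1}) − U(x_t, y_t)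
  ≤ L̄⟨x_t − y_t, x_t − x*⟩ − (L̄/2)‖x_t − y_t‖²`, where `δ^GD = 1/(κ̄ − 1)`. -/
theorem stmt4
    {d : ℕ} (hd : 1 ≤ d)
    {L m : ℝ} (hm : 0 < m) (hmL : m ≤ L)
    (f : EuclideanSpace ℝ (Fin d) → ℝ)
    (hdiff : Differentiable ℝ f)
    (hsmooth : ∀ x y : EuclideanSpace ℝ (Fin d),
      f y ≤ f x + ⟪gradient f x, y - x⟫ + L / 2 * ‖y - x‖ ^ 2)
    (hstrong : ∀ x y : EuclideanSpace ℝ (Fin d),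
      f x + ⟪gradient f x, y - x⟫ + m / 2 * ‖y - x‖ ^ 2 ≤ f y)
    (xstar : EuclideanSpace ℝ (Fin d)) (hmin : ∀ z, f xstar ≤ f z)
    {Lbar : ℝ} (hLbarL : L ≤ Lbar) (hkappa : 1 < Lbar / m)
    (xt yt : EuclideanSpace ℝ (Fin d))
    (y1 : EuclideanSpace ℝ (Fin d)) (hy1 : y1 = xt - (1 / Lbar) • gradient f xt)
    (x1 : EuclideanSpace ℝ (Fin d)) :
    (1 + 1 / (Lbar / m - 1)) * lyapU f xstar Lbar x1 y1 - lyapU f xstar Lbar xt yt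
      ≤ Lbar * ⟪xt - yt, xt - xstar⟫ - Lbar / 2 * ‖xt - yt‖ ^ 2 := by
  have hLm : m < Lbar := (one_lt_div hm).mp hkappa
  have hLb : 0 < Lbar := hm.trans hLm
  obtain ⟨g, hg⟩ : ∃ g, gradient f xt = g := ⟨_, rfl⟩
  have h1 := hsmooth xt y1
  have h2 := hstrong xt xstar
  have h3 := hmin yt
  rw [hg] at h1 h2 hy1
  have hy1x : y1 - xt = -((1 / Lbar) • g) := by rw [hy1]; abel
  have e1 : ⟪g, y1 - xt⟫ = -(1 / Lbar) * ‖g‖ ^ 2 := by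
    rw [hy1x, inner_neg_right, real_inner_smul_right, real_inner_self_eq_norm_sq]; ring
  have e2 : ‖y1 - xt‖ ^ 2 = (1 / Lbar) ^ 2 * ‖g‖ ^ 2 := by
    rw [hy1x, norm_neg, norm_smul, Real.norm_eq_abs, abs_of_pos (by positivity : (0:ℝ) < 1 / Lbar)]
    ring
  have e3 : ‖y1 - xstar‖ ^ 2
      = ‖xt - xstar‖ ^ 2 - 2 * (1 / Lbar) * ⟪g, xt - xstar⟫ + (1 / Lbar) ^ 2 * ‖g‖ ^ 2 := by
    rw [show y1 - xstar = (xt - xstar) - (1 / Lbar) • g from by rw [hy1]; abel,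
      norm_sub_sq_real, real_inner_smul_right, norm_smul, Real.norm_eq_abs,
      abs_of_pos (by positivity : (0:ℝ) < 1 / Lbar), real_inner_comm]
    ring
  have e4 : ‖yt - xstar‖ ^ 2
      = ‖xt - xstar‖ ^ 2 - 2 * ⟪xt - yt, xt - xstar⟫ + ‖xt - yt‖ ^ 2 := by
    rw [show yt - xstar = (xt - xstar) - (xt - yt) from by abel, norm_sub_sq_real,
      real_inner_comm]
  have e5 : ⟪g, xstar - xt⟫ = -⟪g, xt - xstar⟫ := by
    rw [show xstar - xt = -(xt - xstar) from by abel, inner_neg_right]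
  have e6 : ‖xstar - xt‖ = ‖xt - xstar‖ := norm_sub_rev _ _
  rw [e1, e2] at h1
  rw [e5, e6] at h2
  simp only [lyapU]
  rw [e3, e4]
  have hG : (0:ℝ) ≤ ‖g‖ ^ 2 := by positivity
  have hδ : 0 < Lbar / m - 1 := by linarith
  have hLmpos : (0:ℝ) < Lbar - m := by linarith
  have hc : 1 + 1 / (Lbar / m - 1) = Lbar / (Lbar - m) := by
    field_simp
    ring
  rw [hc]
  obtain ⟨c, hcdef⟩ : ∃ c, Lbar / (Lbar - m) = c := ⟨_, rfl⟩
  rw [hcdef]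
  have hc0 : 0 ≤ c := hcdef ▸ by positivity
  have hneg : Lbar / 2 * ((1 / Lbar) ^ 2 * ‖g‖ ^ 2) + L / 2 * ((1 / Lbar) ^ 2 * ‖g‖ ^ 2)
      ≤ (1 / Lbar) * ‖g‖ ^ 2 := by
    have h2' : Lbar * ((1 / Lbar) ^ 2 * ‖g‖ ^ 2) = (1 / Lbar) * ‖g‖ ^ 2 := by
      field_simp
    have h1' : (Lbar / 2 + L / 2) * ((1 / Lbar) ^ 2 * ‖g‖ ^ 2)
        ≤ Lbar * ((1 / Lbar) ^ 2 * ‖g‖ ^ 2) :=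
      mul_le_mul_of_nonneg_right (by linarith) (by positivity)
    nlinarith [h1', h2']
  have hEq : Lbar / 2 * (‖xt - xstar‖ ^ 2 - 2 * (1 / Lbar) * ⟪g, xt - xstar⟫
        + (1 / Lbar) ^ 2 * ‖g‖ ^ 2)
      = Lbar / 2 * ‖xt - xstar‖ ^ 2 - ⟪g, xt - xstar⟫
        + Lbar / 2 * ((1 / Lbar) ^ 2 * ‖g‖ ^ 2) := by
    have hα : Lbar / 2 * (2 * (1 / Lbar)) = 1 := by
      field_simp
    have hexp : Lbar / 2 * (‖xt - xstar‖ ^ 2 - 2 * (1 / Lbar) * ⟪g, xt - xstar⟫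
          + (1 / Lbar) ^ 2 * ‖g‖ ^ 2)
        = Lbar / 2 * ‖xt - xstar‖ ^ 2
          - Lbar / 2 * (2 * (1 / Lbar)) * ⟪g, xt - xstar⟫
          + Lbar / 2 * ((1 / Lbar) ^ 2 * ‖g‖ ^ 2) := by ring
    rw [hexp, hα, one_mul]
  -- key bound: U(y1) ≤ (Lbar - m)/2 * ‖xt - x*‖²
  have key : f y1 - f xstar
      + Lbar / 2 * (‖xt - xstar‖ ^ 2 - 2 * (1 / Lbar) * ⟪g, xt - xstar⟫
        + (1 / Lbar) ^ 2 * ‖g‖ ^ 2)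
      ≤ (Lbar - m) / 2 * ‖xt - xstar‖ ^ 2 := by
    rw [hEq]
    linarith [h1, h2, hneg]
  have key2 : c * (f y1 - f xstar
      + Lbar / 2 * (‖xt - xstar‖ ^ 2 - 2 * (1 / Lbar) * ⟪g, xt - xstar⟫
        + (1 / Lbar) ^ 2 * ‖g‖ ^ 2))
      ≤ Lbar / 2 * ‖xt - xstar‖ ^ 2 := by
    have hcmul : c * (Lbar - m) = Lbar := by
      rw [← hcdef]; exact div_mul_cancel₀ _ hLmpos.ne'
    have h4 : c * ((Lbar - m) / 2 * ‖xt - xstar‖ ^ 2) = Lbar / 2 * ‖xt - xstar‖ ^ 2 := by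
      rw [show c * ((Lbar - m) / 2 * ‖xt - xstar‖ ^ 2)
          = c * (Lbar - m) / 2 * ‖xt - xstar‖ ^ 2 from by ring, hcmul]
    exact le_of_le_of_eq (mul_le_mul_of_nonneg_left key hc0) h4
  linarith [key2, h3]
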